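/- arXiv:1810.09345 — 12 statements merged into one kernel-verified Lean document; each statement's English description precedes it below -/
import Mathlib

section
/- Let R be a Łukasiewicz near semiring with involution α. Then for all x, y ∈ R: (a) x·α(x) = α(x)·x = 0; (b) R is integral, i.e., x + 1 = 1; (c) x·α(x + y) = 0; (d) (x + y)·α(x) = y·α(x); (e) x + y = α(α(x·α(y))·α(y)). -/
/-- A near semiring: ⟨R, +, ·, 0, 1⟩ with ⟨R, +, 0⟩ a commutative monoid,
⟨R, ·, 1⟩ a unital groupoid, right distributivity, and 0 annihilating. -/
structure NearSemiring (R : Type*) where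
  add : R → R → R
  mul : R → R → R
  zero : R
  one : R
  add_assoc : ∀ x y z : R, add (add x y) z = add x (add y z)
  add_comm : ∀ x y : R, add x y = add y x
  add_zero : ∀ x : R, add x zero = x
  mul_one : ∀ x : R, mul x one = x
  one_mul : ∀ x : R, mul one x = x
  right_distrib : ∀ x y z : R, mul (add x y) z = add (mul x z) (mul y z)
  mul_zero : ∀ x : R, mul x zero = zero
  zero_mul : ∀ x : R, mul zero x = zero

/-- The induced relation: x ≤ y iff x + y = y. -/
def NearSemiring.le {R : Type*} (S : NearSemiring R) (x y : R) : Prop :=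
  S.add x y = y

/-- An involutive near semiring: an idempotent near semiring with an
antitone involution α (antitone w.r.t. the order x ≤ y iff x + y = y). -/
structure InvNearSemiring (R : Type*) extends NearSemiring R where
  add_idem : ∀ x : R, add x x = x
  alpha : R → R
  alpha_alpha : ∀ x : R, alpha (alpha x) = x
  alpha_antitone : ∀ x y : R, add x y = y → add (alpha y) (alpha x) = alpha x

/-- A Łukasiewicz near semiring: an involutive near semiring satisfying (Ł). -/
structure LukNearSemiring (R : Type*) extends InvNearSemiring R where
  luk : ∀ x y : R,
    mul (alpha (mul x (alpha y))) (alpha y) = mul (alpha (mul y (alpha x))) (alpha x)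

/-- Basic arithmetic of Łukasiewicz near semirings. -/
theorem lukNearSemiring_arith {R : Type*} (S : LukNearSemiring R) :
    -- (a) x·α(x) = α(x)·x = 0
    (∀ x : R, S.mul x (S.alpha x) = S.zero) ∧
    (∀ x : R, S.mul (S.alpha x) x = S.zero) ∧
    -- (b) integrality: x + 1 = 1
    (∀ x : R, S.add x S.one = S.one) ∧
    -- (c) x·α(x + y) = 0
    (∀ x y : R, S.mul x (S.alpha (S.add x y)) = S.zero) ∧
    -- (d) (x + y)·α(x) = y·α(x)
    (∀ x y : R, S.mul (S.add x y) (S.alpha x) = S.mul y (S.alpha x)) ∧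
    -- (e) x + y = α(α(x·α(y))·α(y))
    (∀ x y : R, S.add x y = S.alpha (S.mul (S.alpha (S.mul x (S.alpha y))) (S.alpha y))) := by
  have luk := S.luk
  have aa := S.alpha_alpha
  have anti := S.alpha_antitone
  have zero_add : ∀ x, S.add S.zero x = x := fun x => by
    rw [S.add_comm]; exact S.add_zero x
  have top : ∀ x : R, S.add x (S.alpha S.zero) = S.alpha S.zero := fun x => by
    have h := anti S.zero (S.alpha x) (zero_add (S.alpha x))
    rw [aa] at h
    exact h
  have h3 : S.mul (S.alpha S.zero) (S.alpha S.one) = S.zero := by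
    have h := luk S.one S.zero
    rw [S.one_mul, aa, S.zero_mul, S.zero_mul] at h
    exact h.symm
  have h4 : S.mul (S.alpha S.one) (S.alpha S.one) = S.zero := by
    have h : S.add (S.mul (S.alpha S.one) (S.alpha S.one))
        (S.mul (S.alpha S.zero) (S.alpha S.one))
        = S.mul (S.alpha S.zero) (S.alpha S.one) := by
      rw [← S.right_distrib, top]
    rw [h3, S.add_zero] at h
    exact h
  have a_one : S.alpha S.one = S.zero := by
    have h := luk S.one (S.alpha S.one)
    rw [h4, aa, S.mul_one, S.mul_one] at h
    rw [h, h3]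
  have a_zero : S.alpha S.zero = S.one := by rw [← a_one, aa]
  have hb : ∀ x : R, S.add x S.one = S.one := fun x => by
    have := top x; rwa [a_zero] at this
  have ha1 : ∀ x : R, S.mul x (S.alpha x) = S.zero := fun x => by
    have h := luk x S.one
    rw [a_one, S.mul_zero, S.one_mul, aa] at h
    exact h.symm
  have ha2 : ∀ x : R, S.mul (S.alpha x) x = S.zero := fun x => by
    have h := ha1 (S.alpha x); rwa [aa] at h
  have hd : ∀ x y : R, S.mul (S.add x y) (S.alpha x) = S.mul y (S.alpha x) := fun x y => by
    rw [S.right_distrib, ha1, zero_add]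
  have le_add : ∀ x y : R, S.add x (S.add x y) = S.add x y := fun x y => by
    rw [← S.add_assoc, S.add_idem]
  have hc : ∀ x y : R, S.mul x (S.alpha (S.add x y)) = S.zero := fun x y => by
    have h : S.add (S.mul x (S.alpha (S.add x y)))
        (S.mul (S.add x y) (S.alpha (S.add x y)))
        = S.mul (S.add x y) (S.alpha (S.add x y)) := by
      rw [← S.right_distrib, le_add]
    rw [ha1, S.add_zero] at h
    exact h
  have he : ∀ x y : R, S.add x y
      = S.alpha (S.mul (S.alpha (S.mul x (S.alpha y))) (S.alpha y)) := fun x y => by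
    have h := luk y (S.add x y)
    have hyx : S.mul y (S.alpha (S.add x y)) = S.zero := by
      have := hc y x; rwa [S.add_comm y x] at this
    rw [hyx, a_zero, S.one_mul] at h
    have hdy : S.mul (S.add x y) (S.alpha y) = S.mul x (S.alpha y) := by
      rw [S.add_comm]; exact hd y x
    rw [hdy] at h
    rw [← h, aa]
  exact ⟨ha1, ha2, hb, hc, hd, he⟩
end

section
/- Let R be a Łukasiewicz near semiring with involution α. Then for all x, y ∈ R, x ≤ y (i.e., x + y = y) if and only if x·α(y) = 0. -/
/-- In a Łukasiewicz near semiring, x ≤ y iff x·α(y) = 0. -/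
theorem lukNearSemiring_le_iff {R : Type*} (S : LukNearSemiring R) (x y : R) :
    S.add x y = y ↔ S.mul x (S.alpha y) = S.zero := by
  have zero_add : ∀ z : R, S.add S.zero z = z := fun z => by
    rw [S.add_comm, S.add_zero]
  -- t := α(0) is the top element
  have top : ∀ z : R, S.add z (S.alpha S.zero) = S.alpha S.zero := by
    intro z
    have h0 : S.add S.zero (S.alpha z) = S.alpha z := zero_add _
    have h1 := S.alpha_antitone _ _ h0
    rwa [S.alpha_alpha] at h1
  -- t·α(1) = 0
  have ta : S.mul (S.alpha S.zero) (S.alpha S.one) = S.zero := by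
    have h := S.luk S.one S.zero
    rw [S.one_mul, S.alpha_alpha, S.zero_mul, S.zero_mul] at h
    exact h.symm
  -- α(1)·α(1) = 0
  have aa : S.mul (S.alpha S.one) (S.alpha S.one) = S.zero := by
    have h1 : S.add (S.alpha S.one) (S.alpha S.zero) = S.alpha S.zero := top _
    have h2 : S.add (S.mul (S.alpha S.one) (S.alpha S.one))
        (S.mul (S.alpha S.zero) (S.alpha S.one))
        = S.mul (S.alpha S.zero) (S.alpha S.one) := by
      rw [← S.right_distrib, h1]
    rw [ta, S.add_zero] at h2
    exact h2
  -- α(1) = 0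
  have a0 : S.alpha S.one = S.zero := by
    have h := S.luk (S.alpha S.one) S.one
    rw [S.one_mul, S.alpha_alpha, S.alpha_alpha, S.mul_one] at h
    -- h : α(α(1)·α(1))·α(1) = α(1)
    rw [aa, ta] at h
    exact h.symm
  -- α(0) = 1
  have azero : S.alpha S.zero = S.one := by
    rw [← a0, S.alpha_alpha]
  -- y·α(y) = 0 for all y
  have xax : ∀ z : R, S.mul z (S.alpha z) = S.zero := by
    intro z
    have h := S.luk S.one z
    rw [S.one_mul, S.alpha_alpha, a0, S.mul_zero] at h
    exact h
  -- u·v ≤ v for all u v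
  have mul_le : ∀ u v : R, S.add (S.mul u v) v = v := by
    intro u v
    have h1 : S.add u S.one = S.one := by rw [← azero]; exact top u
    calc S.add (S.mul u v) v = S.add (S.mul u v) (S.mul S.one v) := by rw [S.one_mul]
      _ = S.mul (S.add u S.one) v := (S.right_distrib _ _ _).symm
      _ = S.mul S.one v := by rw [h1]
      _ = v := S.one_mul v
  constructor
  · intro h
    have h2 : S.add (S.mul x (S.alpha y)) (S.mul y (S.alpha y))
        = S.mul y (S.alpha y) := by
      rw [← S.right_distrib, h]
    rw [xax y, S.add_zero] at h2
    exact h2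
  · intro h
    have hL := S.luk x y
    rw [h, azero, S.one_mul] at hL
    -- hL : α(y) = α(y·α(x))·α(x)
    have h2 := mul_le (S.alpha (S.mul y (S.alpha x))) (S.alpha x)
    rw [← hL] at h2
    -- h2 : α(y) + α(x) = α(x)
    have h3 := S.alpha_antitone _ _ h2
    rwa [S.alpha_alpha, S.alpha_alpha] at h3
end

section
/- Let R be a Łukasiewicz near semiring whose multiplication is associative: (x·y)·z = x·(y·z) for all x, y, z. Then multiplication is commutative (x·y = y·x for all x, y) and left distributivity x·(y + z) = (x·y) + (x·z) holds; hence R is a commutative Łukasiewicz semiring. -/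
/-- A Łukasiewicz near semiring with associative multiplication is a commutative
Łukasiewicz semiring: multiplication commutes and left distributivity holds. -/
theorem lukNearSemiring_assoc_comm {R : Type*} (S : LukNearSemiring R)
    (hassoc : ∀ x y z : R, S.mul (S.mul x y) z = S.mul x (S.mul y z)) :
    (∀ x y : R, S.mul x y = S.mul y x) ∧
    (∀ x y z : R, S.mul x (S.add y z) = S.add (S.mul x y) (S.mul x z)) := by
  -- Basic order facts for the relation x ≤ y ↔ x + y = y
  have h0le : ∀ x : R, S.add S.zero x = x := fun x => by
    rw [S.add_comm, S.add_zero]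
  have hantisym : ∀ x y : R, S.add x y = y → S.add y x = x → x = y := by
    intro x y h1 h2
    rw [← h2, S.add_comm, h1]
  have le_zero_eq : ∀ x : R, S.add x S.zero = S.zero → x = S.zero := by
    intro x h
    rw [← S.add_zero x, h]
  -- right multiplication is monotone
  have hmono : ∀ x y z : R, S.add x y = y →
      S.add (S.mul x z) (S.mul y z) = S.mul y z := by
    intro x y z h
    rw [← S.right_distrib, h]
  -- α 1 = 0 (hence α 0 = 1 and 1 is the top element)
  have ha1 : S.alpha S.one = S.zero := by
    have t0 : S.mul (S.alpha S.zero) (S.alpha S.one) = S.zero := by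
      have h := S.luk S.zero S.one
      rw [S.zero_mul, S.one_mul, S.alpha_alpha, S.zero_mul] at h
      exact h
    have h1top : S.add S.one (S.alpha S.zero) = S.alpha S.zero := by
      have h := S.alpha_antitone S.zero (S.alpha S.one) (h0le _)
      rwa [S.alpha_alpha] at h
    have h2 := hmono S.one (S.alpha S.zero) (S.alpha S.one) h1top
    rw [S.one_mul, t0] at h2
    exact le_zero_eq _ h2
  have ha0 : S.alpha S.zero = S.one := by
    rw [← ha1, S.alpha_alpha]
  have le_one : ∀ x : R, S.add x S.one = S.one := by
    intro x
    have h := S.alpha_antitone S.zero (S.alpha x) (h0le _)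
    rwa [S.alpha_alpha, ha0] at h
  -- x·y ≤ y
  have hL3 : ∀ x y : R, S.add (S.mul x y) y = y := by
    intro x y
    have h := hmono x S.one y (le_one x)
    rwa [S.one_mul] at h
  -- x·αx = 0 and αx·x = 0
  have hxx' : ∀ x : R, S.mul x (S.alpha x) = S.zero := by
    intro x
    have h := S.luk x S.one
    rw [ha1, S.mul_zero, S.one_mul, S.alpha_alpha] at h
    exact h.symm
  have hx'x : ∀ x : R, S.mul (S.alpha x) x = S.zero := by
    intro x
    have h := hxx' (S.alpha x)
    rwa [S.alpha_alpha] at h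
  -- symmetric meet identity: (α x · y)' · y = (α y · x)' · x
  have hM : ∀ x y : R,
      S.mul (S.alpha (S.mul (S.alpha x) y)) y
        = S.mul (S.alpha (S.mul (S.alpha y) x)) x := by
    intro x y
    have h := S.luk (S.alpha x) (S.alpha y)
    rwa [S.alpha_alpha, S.alpha_alpha] at h
  -- a·b = 0 → b ≤ α a
  have h15 : ∀ a b : R, S.mul a b = S.zero → S.add b (S.alpha a) = S.alpha a := by
    intro a b h
    have hm := hM (S.alpha a) b
    rw [S.alpha_alpha, h, ha0, S.one_mul] at hm
    rw [hm]
    exact hL3 _ _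
  -- key: x·y ≤ y·x
  have key : ∀ x y : R, S.add (S.mul x y) (S.mul y x) = S.mul y x := by
    intro x y
    have h1 : S.add (S.mul (S.alpha (S.mul (S.alpha (S.alpha y)) x)) x)
        (S.alpha y) = S.alpha y := by
      rw [hM (S.alpha y) x]
      exact hL3 _ _
    rw [S.alpha_alpha] at h1
    have h2 := hmono _ _ y h1
    rw [hx'x] at h2
    have h3 : S.mul (S.mul (S.alpha (S.mul y x)) x) y = S.zero :=
      le_zero_eq _ h2
    rw [hassoc] at h3
    have h4 := h15 _ _ h3
    rwa [S.alpha_alpha] at h4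
  have comm : ∀ x y : R, S.mul x y = S.mul y x := fun x y =>
    hantisym _ _ (key x y) (key y x)
  refine ⟨comm, fun x y z => ?_⟩
  rw [comm x (S.add y z), S.right_distrib, comm y x, comm z x]
end

section
/- Let R be a Łukasiewicz near semiring with involution α, let ≤ be the induced order (x ≤ y iff x + y = y), and let a ∈ R. Define h_a(x) = α(x·α(a)). Then h_a is an antitone involution on the interval [a,1] = {x ∈ R : a ≤ x}: (i) if a ≤ x then a ≤ h_a(x); (ii) if a ≤ x, a ≤ y and x ≤ y then h_a(y) ≤ h_a(x); (iii) if a ≤ x then h_a(h_a(x)) = x. -/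
section Aux

variable {R : Type*} (S : LukNearSemiring R)

/-- Left multiplication is monotone. -/
lemma luk_mul_mono (x y z : R) (h : S.add x y = y) :
    S.add (S.mul x z) (S.mul y z) = S.mul y z := by
  rw [← S.right_distrib, h]

/-- α(0)·α(1) = 0, from (Ł) at (1,0). -/
lemma luk_aux1 : S.mul (S.alpha S.zero) (S.alpha S.one) = S.zero := by
  have h := S.luk S.one S.zero
  rw [S.one_mul, S.alpha_alpha, S.zero_mul, S.zero_mul] at h
  exact h.symm

/-- α(1) = 0. -/
lemma luk_alpha_one : S.alpha S.one = S.zero := by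
  have h01 : S.add S.zero S.one = S.one := by rw [S.add_comm, S.add_zero]
  have hwT : S.add (S.alpha S.one) (S.alpha S.zero) = S.alpha S.zero := by
    exact S.alpha_antitone S.zero S.one h01
  -- α(1)·α(1) ≤ α(0)·α(1) = 0, hence α(1)·α(1) = 0
  have hww : S.mul (S.alpha S.one) (S.alpha S.one) = S.zero := by
    have h2 := luk_mul_mono S (S.alpha S.one) (S.alpha S.zero) (S.alpha S.one) hwT
    rw [luk_aux1 S, S.add_zero] at h2
    exact h2
  -- (Ł) at (1, α(1))
  have h3 := S.luk S.one (S.alpha S.one)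
  rw [S.alpha_alpha, S.one_mul, S.mul_one, hww, luk_aux1 S] at h3
  exact h3

/-- α(0) = 1. -/
lemma luk_alpha_zero : S.alpha S.zero = S.one := by
  have := S.alpha_alpha S.one
  rwa [luk_alpha_one S] at this

/-- 1 is the top element. -/
lemma luk_le_one (x : R) : S.add x S.one = S.one := by
  have h0 : S.add S.zero (S.alpha x) = S.alpha x := by rw [S.add_comm, S.add_zero]
  have := S.alpha_antitone S.zero (S.alpha x) h0
  rwa [S.alpha_alpha, luk_alpha_zero S] at this

/-- x·y ≤ y. -/
lemma luk_mul_le (x y : R) : S.add (S.mul x y) y = y := by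
  have := luk_mul_mono S x S.one y (luk_le_one S x)
  rwa [S.one_mul] at this

/-- x·α(x) = 0. -/
lemma luk_mul_alpha_self (x : R) : S.mul x (S.alpha x) = S.zero := by
  have h := S.luk x S.one
  rw [luk_alpha_one S, S.mul_zero, S.one_mul, S.alpha_alpha] at h
  exact h.symm

end Aux

/-- In a Łukasiewicz near semiring, the map h_a(x) = α(x·α(a)) is an antitone
involution on the interval [a, 1]. -/
theorem lukNearSemiring_sectional_involution {R : Type*} (S : LukNearSemiring R)
    (a : R) :
    -- (i) h_a maps [a,1] into [a,1]
    (∀ x : R, S.le a x → S.le a (S.alpha (S.mul x (S.alpha a)))) ∧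
    -- (ii) h_a is antitone on [a,1]
    (∀ x y : R, S.le a x → S.le a y → S.le x y →
      S.le (S.alpha (S.mul y (S.alpha a))) (S.alpha (S.mul x (S.alpha a)))) ∧
    -- (iii) h_a is an involution on [a,1]
    (∀ x : R, S.le a x →
      S.alpha (S.mul (S.alpha (S.mul x (S.alpha a))) (S.alpha a)) = x) := by
  refine ⟨?_, ?_, ?_⟩
  · -- (i)
    intro x _
    have h1 : S.add (S.mul x (S.alpha a)) (S.alpha a) = S.alpha a := luk_mul_le S x (S.alpha a)
    have h2 := S.alpha_antitone (S.mul x (S.alpha a)) (S.alpha a) h1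
    rw [S.alpha_alpha] at h2
    exact h2
  · -- (ii)
    intro x y _ _ hxy
    have hxy' : S.add x y = y := hxy
    have h1 := luk_mul_mono S x y (S.alpha a) hxy'
    have h2 := S.alpha_antitone (S.mul x (S.alpha a)) (S.mul y (S.alpha a)) h1
    exact h2
  · -- (iii)
    intro x hax
    have hax' : S.add a x = x := hax
    -- a·α(x) ≤ x·α(x) = 0, hence a·α(x) = 0
    have h1 := luk_mul_mono S a x (S.alpha x) hax'
    rw [luk_mul_alpha_self S x, S.add_zero] at h1
    -- (Ł) at (x, a)
    have h2 := S.luk x a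
    rw [h1, luk_alpha_zero S, S.one_mul] at h2
    rw [h2, S.alpha_alpha]
end

section
/- Let R be a Łukasiewicz near semiring with involution α. Define the ternary terms t₁(x,y,z) = ((x·α(y)) + (y·α(x))) + z and t₂(x,y,z) = α((x·α(y)) + (y·α(x)))·z. Then for all x, y, z ∈ R: t₁(x,y,z) = z and t₂(x,y,z) = z if and only if x = y. (Consequently, by Csákány's criterion, the variety of Łukasiewicz near semirings is congruence regular.) -/
namespace LukAux

variable {R : Type*} (S : LukNearSemiring R)

lemma zero_le (x : R) : S.add S.zero x = x := by
  rw [S.add_comm, S.add_zero]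

lemma le_top (x : R) : S.add x (S.alpha S.zero) = S.alpha S.zero := by
  have h := S.alpha_antitone S.zero (S.alpha x) (zero_le S (S.alpha x))
  rwa [S.alpha_alpha] at h

lemma mono {u v : R} (w : R) (h : S.add u v = v) :
    S.add (S.mul u w) (S.mul v w) = S.mul v w := by
  rw [← S.right_distrib, h]

lemma top_mul : S.mul (S.alpha S.zero) (S.alpha S.one) = S.zero := by
  have h := S.luk S.one S.zero
  rw [S.one_mul, S.alpha_alpha, S.zero_mul, S.zero_mul] at h
  exact h.symm

lemma mul_alpha_one (x : R) : S.mul x (S.alpha S.one) = S.zero := by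
  have h := mono S (S.alpha S.one) (le_top S x)
  rwa [top_mul, S.add_zero] at h

lemma mul_alpha_self (x : R) : S.mul x (S.alpha x) = S.zero := by
  have h := S.luk S.one x
  rw [S.one_mul, S.alpha_alpha, mul_alpha_one] at h
  exact h

lemma alpha_one : S.alpha S.one = S.zero := by
  have h := mul_alpha_self S (S.alpha S.one)
  rwa [S.alpha_alpha, S.mul_one] at h

lemma alpha_zero : S.alpha S.zero = S.one := by
  rw [← alpha_one S, S.alpha_alpha]

lemma le_one (x : R) : S.add x S.one = S.one := by
  have h := le_top S x
  rwa [alpha_zero] at h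

lemma mul_le (u w : R) : S.add (S.mul u w) w = w := by
  have h := mono S w (le_one S u)
  rwa [S.one_mul] at h

lemma le_of_mul_alpha (u v : R) (h : S.mul u (S.alpha v) = S.zero) :
    S.add u v = v := by
  have hl := S.luk u v
  rw [h, alpha_zero, S.one_mul] at hl
  have h2 := mul_le S (S.alpha (S.mul v (S.alpha u))) (S.alpha u)
  rw [← hl] at h2
  have h3 := S.alpha_antitone (S.alpha v) (S.alpha u) h2
  rwa [S.alpha_alpha, S.alpha_alpha] at h3

lemma sum_zero_left {p q : R} (h : S.add p q = S.zero) : p = S.zero := by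
  have h1 : S.add p (S.add p q) = S.add p q := by
    rw [← S.add_assoc, S.add_idem]
  rw [h, S.add_zero] at h1
  exact h1

lemma sum_zero_right {p q : R} (h : S.add p q = S.zero) : q = S.zero :=
  sum_zero_left S ((S.add_comm q p).trans h)

end LukAux

/-- Congruence regularity witness terms for Łukasiewicz near semirings:
t₁(x,y,z) = ((x·α(y)) + (y·α(x))) + z and
t₂(x,y,z) = α((x·α(y)) + (y·α(x)))·z satisfy
t₁(x,y,z) = z ∧ t₂(x,y,z) = z iff x = y. -/
theorem lukNearSemiring_congruence_regular {R : Type*} (S : LukNearSemiring R)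
    (x y z : R) :
    (S.add (S.add (S.mul x (S.alpha y)) (S.mul y (S.alpha x))) z = z ∧
     S.mul (S.alpha (S.add (S.mul x (S.alpha y)) (S.mul y (S.alpha x)))) z = z)
    ↔ x = y := by
  open LukAux in
  constructor
  · rintro ⟨h1, h2⟩
    set s := S.add (S.mul x (S.alpha y)) (S.mul y (S.alpha x)) with hs
    have key0 : S.mul (S.alpha z) z = S.zero := by
      have h := mul_alpha_self S (S.alpha z)
      rwa [S.alpha_alpha] at h
    have hB := S.luk (S.alpha z) (S.alpha s)
    rw [S.alpha_alpha, S.alpha_alpha, h2, key0] at hB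
    have hC : S.add (S.alpha (S.mul (S.alpha z) s)) (S.alpha s) = S.alpha s := by
      apply le_of_mul_alpha
      rwa [S.alpha_alpha]
    have hC2 := S.alpha_antitone _ _ hC
    rw [S.alpha_alpha, S.alpha_alpha] at hC2
    have hD := mul_le S (S.alpha z) s
    have hsz : s = S.mul (S.alpha z) s :=
      calc s = S.add (S.mul (S.alpha z) s) s := hD.symm
        _ = S.add s (S.mul (S.alpha z) s) := S.add_comm _ _
        _ = S.mul (S.alpha z) s := hC2
    have hE1 := S.alpha_antitone s z h1
    have hE2 := mono S s hE1
    have hss : S.mul (S.alpha s) s = S.zero := by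
      have h := mul_alpha_self S (S.alpha s)
      rwa [S.alpha_alpha] at h
    rw [hss, S.add_zero] at hE2
    have hs0 : S.add (S.mul x (S.alpha y)) (S.mul y (S.alpha x)) = S.zero :=
      hs.symm.trans (hsz.trans hE2)
    have hp := sum_zero_left S hs0
    have hq := sum_zero_right S hs0
    have hL := S.luk x y
    rw [hp, hq, alpha_zero, S.one_mul, S.one_mul] at hL
    have h := congrArg S.alpha hL
    rw [S.alpha_alpha, S.alpha_alpha] at h
    exact h.symm
  · rintro rfl
    constructor
    · rw [mul_alpha_self, S.add_zero]
      exact LukAux.zero_le S z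
    · rw [mul_alpha_self, S.add_zero, LukAux.alpha_zero, S.one_mul]
end

section
/- Let R be a Łukasiewicz near semiring with involution α. Define M(x,y,z) = α(α(x) + α(y)) + α(α(y) + α(z)) + α(α(z) + α(x)). Then M is a majority term: M(x,x,y) = M(x,y,x) = M(y,x,x) = x for all x, y ∈ R. (Consequently the variety of Łukasiewicz near semirings is congruence distributive.) -/
/-- The majority term for Łukasiewicz near semirings:
M(x,y,z) = α(α(x)+α(y)) + α(α(y)+α(z)) + α(α(z)+α(x)). -/
def majTerm {R : Type*} (S : LukNearSemiring R) (x y z : R) : R :=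
  S.add (S.add (S.alpha (S.add (S.alpha x) (S.alpha y)))
               (S.alpha (S.add (S.alpha y) (S.alpha z))))
        (S.alpha (S.add (S.alpha z) (S.alpha x)))

/-- M is a majority term: M(x,x,y) = M(x,y,x) = M(y,x,x) = x. -/
theorem lukNearSemiring_majority {R : Type*} (S : LukNearSemiring R) (x y : R) :
    majTerm S x x y = x ∧ majTerm S x y x = x ∧ majTerm S y x x = x := by
  have key : ∀ a b : R, S.add (S.alpha (S.add (S.alpha a) (S.alpha b))) a = a := by
    intro a b
    have h1 : S.add (S.alpha a) (S.add (S.alpha a) (S.alpha b))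
        = S.add (S.alpha a) (S.alpha b) := by
      rw [← S.add_assoc, S.add_idem]
    have h2 := S.alpha_antitone _ _ h1
    rwa [S.alpha_alpha] at h2
  have selfx : ∀ a : R, S.alpha (S.add (S.alpha a) (S.alpha a)) = a := by
    intro a; rw [S.add_idem, S.alpha_alpha]
  refine ⟨?_, ?_, ?_⟩
  · show S.add (S.add (S.alpha (S.add (S.alpha x) (S.alpha x)))
        (S.alpha (S.add (S.alpha x) (S.alpha y))))
        (S.alpha (S.add (S.alpha y) (S.alpha x))) = x
    rw [selfx, S.add_comm (S.alpha y) (S.alpha x), S.add_assoc, S.add_idem,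
      S.add_comm, key]
  · show S.add (S.add (S.alpha (S.add (S.alpha x) (S.alpha y)))
        (S.alpha (S.add (S.alpha y) (S.alpha x))))
        (S.alpha (S.add (S.alpha x) (S.alpha x))) = x
    rw [selfx, S.add_comm (S.alpha y) (S.alpha x), S.add_idem, key]
  · show S.add (S.add (S.alpha (S.add (S.alpha y) (S.alpha x)))
        (S.alpha (S.add (S.alpha x) (S.alpha x))))
        (S.alpha (S.add (S.alpha x) (S.alpha y))) = x
    rw [selfx, S.add_comm (S.alpha y) (S.alpha x), S.add_assoc,
      S.add_comm x, ← S.add_assoc, S.add_idem, key]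
end

section
/- Let R be an orthomodular near semiring with involution α. Then for all x, y ∈ R: (a) x·x = x; (b) x = x·α(α(y·α(x))·α(x)); (c) x + α(x) = 1; (d) if x ≤ y (i.e., x + y = y) then x·y = x. -/
/-- An orthomodular near semiring: a Łukasiewicz near semiring with x = x·(x+y). -/
structure OMNearSemiring (R : Type*) extends LukNearSemiring R where
  om : ∀ x y : R, x = mul x (add x y)

/-- Basic arithmetic of orthomodular near semirings. -/
theorem omNearSemiring_arith {R : Type*} (S : OMNearSemiring R) :
    -- (a) x·x = x
    (∀ x : R, S.mul x x = x) ∧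
    -- (b) x = x·α(α(y·α(x))·α(x))
    (∀ x y : R,
      x = S.mul x (S.alpha (S.mul (S.alpha (S.mul y (S.alpha x))) (S.alpha x)))) ∧
    -- (c) x + α(x) = 1
    (∀ x : R, S.add x (S.alpha x) = S.one) ∧
    -- (d) x ≤ y implies x·y = x
    (∀ x y : R, S.add x y = y → S.mul x y = x) := by
  -- (d) and (a) follow directly from orthomodularity
  have le_mul : ∀ x y : R, S.add x y = y → S.mul x y = x := by
    intro x y h
    have := S.om x y
    rw [h] at this
    exact this.symm
  have idem : ∀ x : R, S.mul x x = x := by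
    intro x
    have := S.om x x
    rw [S.add_idem] at this
    exact this.symm
  have zero_add : ∀ x : R, S.add S.zero x = x := by
    intro x; rw [S.add_comm, S.add_zero]
  -- α0 = 1
  have alpha_zero : S.alpha S.zero = S.one := by
    have h1 : S.add S.one (S.alpha S.zero) = S.alpha S.zero := by
      have := S.alpha_antitone S.zero (S.alpha S.one) (zero_add _)
      rwa [S.alpha_alpha] at this
    have := S.om S.one (S.alpha S.zero)
    rw [h1, S.one_mul] at this
    exact this.symm
  have alpha_one : S.alpha S.one = S.zero := by
    have := congrArg S.alpha alpha_zero
    rw [S.alpha_alpha] at this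
    exact this.symm
  -- x · αx = 0
  have mul_alpha : ∀ x : R, S.mul x (S.alpha x) = S.zero := by
    intro x
    have h := S.luk S.one x
    rw [S.one_mul, S.alpha_alpha, alpha_one, S.mul_zero] at h
    exact h
  -- (c)
  have part_c : ∀ x : R, S.add x (S.alpha x) = S.one := by
    intro x
    set t := S.add x (S.alpha x) with ht
    have hx_t : S.add x t = t := by
      rw [ht, ← S.add_assoc, S.add_idem]
    have hax_t : S.add (S.alpha x) t = t := by
      rw [ht, S.add_comm x (S.alpha x), ← S.add_assoc, S.add_idem]
    have ha_ax : S.add (S.alpha t) (S.alpha x) = S.alpha x :=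
      S.alpha_antitone x t hx_t
    have ha_t : S.add (S.alpha t) t = t := by
      have step : S.add (S.alpha t) t = S.add (S.add (S.alpha t) (S.alpha x)) t := by
        rw [S.add_assoc, hax_t]
      rw [step, ha_ax, hax_t]
    have h1 : S.mul (S.alpha t) t = S.alpha t := le_mul _ _ ha_t
    have h2 : S.mul (S.alpha t) t = S.zero := by
      have := mul_alpha (S.alpha t)
      rwa [S.alpha_alpha] at this
    have hat : S.alpha t = S.zero := by rw [← h1, h2]
    have := congrArg S.alpha hat
    rwa [S.alpha_alpha, alpha_zero] at this
  -- x·y ≤ y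
  have mul_le : ∀ x y : R, S.add (S.mul x y) y = y := by
    intro x y
    have hx1 : S.add x S.one = S.one := by
      have := part_c (S.alpha x)
      rw [S.alpha_alpha, S.add_comm] at this
      have h1 : S.add x S.one = S.one := by
        conv_lhs => rw [← this, ← S.add_assoc, S.add_idem]
        exact this
      exact h1
    have := S.right_distrib x S.one y
    rw [hx1, S.one_mul] at this
    exact this.symm
  -- (b)
  have part_b : ∀ x y : R,
      x = S.mul x (S.alpha (S.mul (S.alpha (S.mul y (S.alpha x))) (S.alpha x))) := by
    intro x y
    set c := S.mul (S.alpha (S.mul y (S.alpha x))) (S.alpha x) with hc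
    have h1 : S.add c (S.alpha x) = S.alpha x := mul_le _ _
    have h2 : S.add x (S.alpha c) = S.alpha c := by
      have := S.alpha_antitone c (S.alpha x) h1
      rwa [S.alpha_alpha] at this
    exact (le_mul _ _ h2).symm
  exact ⟨idem, part_b, part_c, le_mul⟩
end

section
/- Let L = ⟨L, ∨, ∧, ', 0, 1⟩ be an orthomodular lattice. Define x + y = x ∨ y, α(x) = x', and multiplication by the Sasaki projection x·y = (x ∨ y') ∧ y. Then ⟨L, +, ·, α, 0, 1⟩ is an orthomodular near semiring: ⟨L, ∨, 0⟩ is a commutative idempotent monoid, 1 is a two-sided unit and 0 a two-sided annihilator for ·, right distributivity (x ∨ y)·z = (x·z) ∨ (y·z) holds, α is an antitone involution, the identity (Ł) α(x·α(y))·α(y) = α(y·α(x))·α(x) holds, and x = x·(x ∨ y). -/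
/-- Every orthomodular lattice, with x + y = x ∨ y, α(x) = x' and the Sasaki
projection x·y = (x ∨ y') ∧ y, is an orthomodular near semiring. -/
theorem orthomodularLattice_to_omNearSemiring {L : Type*} [Lattice L]
    [BoundedOrder L] (compl : L → L)
    (compl_compl : ∀ x : L, compl (compl x) = x)
    (compl_antitone : ∀ x y : L, x ≤ y → compl y ≤ compl x)
    (inf_compl : ∀ x : L, x ⊓ compl x = ⊥)
    (sup_compl : ∀ x : L, x ⊔ compl x = ⊤)
    (orthomodular : ∀ x y : L, x ≤ y → y = x ⊔ (y ⊓ compl x)) :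
    -- ⟨L, ∨, ⊥⟩ is a commutative idempotent monoid
    (∀ x y z : L, (x ⊔ y) ⊔ z = x ⊔ (y ⊔ z)) ∧
    (∀ x y : L, x ⊔ y = y ⊔ x) ∧
    (∀ x : L, x ⊔ ⊥ = x) ∧
    (∀ x : L, x ⊔ x = x) ∧
    -- ⊤ is a two-sided unit for the Sasaki multiplication
    (∀ x : L, (x ⊔ compl ⊤) ⊓ ⊤ = x) ∧
    (∀ x : L, (⊤ ⊔ compl x) ⊓ x = x) ∧
    -- ⊥ is a two-sided annihilator
    (∀ x : L, (x ⊔ compl ⊥) ⊓ ⊥ = ⊥) ∧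
    (∀ x : L, (⊥ ⊔ compl x) ⊓ x = ⊥) ∧
    -- right distributivity
    (∀ x y z : L, ((x ⊔ y) ⊔ compl z) ⊓ z = ((x ⊔ compl z) ⊓ z) ⊔ ((y ⊔ compl z) ⊓ z)) ∧
    -- the complementation is an antitone involution w.r.t. the induced order
    (∀ x : L, compl (compl x) = x) ∧
    (∀ x y : L, x ⊔ y = y → compl y ⊔ compl x = compl x) ∧
    -- the Łukasiewicz identity (Ł): α(x·α(y))·α(y) = α(y·α(x))·α(x)
    (∀ x y : L,
      (compl ((x ⊔ compl (compl y)) ⊓ compl y) ⊔ compl (compl y)) ⊓ compl y =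
      (compl ((y ⊔ compl (compl x)) ⊓ compl x) ⊔ compl (compl x)) ⊓ compl x) ∧
    -- the orthomodular near semiring law x = x·(x + y)
    (∀ x y : L, x = (x ⊔ compl (x ⊔ y)) ⊓ (x ⊔ y)) := by
  -- De Morgan laws from the antitone involution
  have dm_sup : ∀ a b : L, compl (a ⊔ b) = compl a ⊓ compl b := by
    intro a b
    apply le_antisymm
    · exact le_inf (compl_antitone _ _ le_sup_left) (compl_antitone _ _ le_sup_right)
    · have h : a ⊔ b ≤ compl (compl a ⊓ compl b) := by
        refine sup_le ?_ ?_
        · have := compl_antitone _ _ (inf_le_left (a := compl a) (b := compl b))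
          rwa [compl_compl] at this
        · have := compl_antitone _ _ (inf_le_right (a := compl a) (b := compl b))
          rwa [compl_compl] at this
      have := compl_antitone _ _ h
      rwa [compl_compl] at this
  have dm_inf : ∀ a b : L, compl (a ⊓ b) = compl a ⊔ compl b := by
    intro a b
    have := dm_sup (compl a) (compl b)
    rw [compl_compl, compl_compl] at this
    rw [← this, compl_compl]
  -- key lemma: Sasaki projection fixes elements below z
  have sasaki_of_le : ∀ w z : L, w ≤ z → (w ⊔ compl z) ⊓ z = w := by
    intro w z hwz
    have h1 : compl z ≤ compl w := compl_antitone _ _ hwz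
    have h2 : compl w = compl z ⊔ (compl w ⊓ compl (compl z)) := orthomodular _ _ h1
    have h3 : w = compl (compl z ⊔ (compl w ⊓ compl (compl z))) := by
      rw [← h2, compl_compl]
    rw [dm_sup, dm_inf] at h3; simp only [compl_compl] at h3
    rw [inf_comm]
    exact h3.symm
  -- adjunction for the Sasaki projection
  have adj1 : ∀ x z w : L, (x ⊔ compl z) ⊓ z ≤ w → x ≤ compl z ⊔ (z ⊓ w) := by
    intro x z w h
    have h2 : x ⊔ compl z = compl z ⊔ ((x ⊔ compl z) ⊓ z) := by
      have := orthomodular (compl z) (x ⊔ compl z) le_sup_right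
      rwa [compl_compl] at this
    calc x ≤ x ⊔ compl z := le_sup_left
      _ = compl z ⊔ ((x ⊔ compl z) ⊓ z) := h2
      _ ≤ compl z ⊔ (z ⊓ w) := sup_le_sup_left (le_inf inf_le_right (le_trans le_rfl h)) _
  have adj2 : ∀ x z w : L, x ≤ compl z ⊔ (z ⊓ w) → (x ⊔ compl z) ⊓ z ≤ w := by
    intro x z w h
    have h1 : x ⊔ compl z ≤ compl z ⊔ (z ⊓ w) := sup_le h le_sup_left
    have h2 : (x ⊔ compl z) ⊓ z ≤ ((z ⊓ w) ⊔ compl z) ⊓ z :=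
      inf_le_inf_right _ (by rwa [sup_comm (compl z)] at h1)
    rw [sasaki_of_le (z ⊓ w) z inf_le_left] at h2
    exact le_trans h2 inf_le_right
  refine ⟨fun x y z => sup_assoc x y z, fun x y => sup_comm x y, fun x => sup_bot_eq x,
    fun x => sup_idem x, ?_, ?_, ?_, ?_, ?_, compl_compl, ?_, ?_, ?_⟩
  · -- x · 1 = x
    intro x
    have hct : compl ⊤ = ⊥ := by
      have := inf_compl (⊤ : L); rwa [top_inf_eq] at this
    rw [hct, sup_bot_eq, inf_top_eq]
  · -- 1 · x = x
    intro x; rw [top_sup_eq, top_inf_eq]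
  · intro x; exact inf_bot_eq _
  · intro x
    rw [bot_sup_eq, inf_comm]; exact inf_compl x
  · -- right distributivity
    intro x y z
    apply le_antisymm
    · apply adj2
      refine sup_le (adj1 _ _ _ ?_) (adj1 _ _ _ ?_)
      · exact le_sup_left
      · exact le_sup_right
    · refine sup_le (inf_le_inf_right _ (sup_le_sup_right le_sup_left _))
        (inf_le_inf_right _ (sup_le_sup_right le_sup_right _))
  · -- antitone
    intro x y h
    exact sup_eq_right.mpr (compl_antitone _ _ (sup_eq_right.mp h))
  · -- Łukasiewicz
    intro x y
    have key : ∀ a b : L,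
        (compl ((a ⊔ compl (compl b)) ⊓ compl b) ⊔ compl (compl b)) ⊓ compl b =
        compl a ⊓ compl b := by
      intro a b
      rw [compl_compl, dm_inf, dm_sup, compl_compl]
      rw [sup_assoc, sup_idem]
      have := sasaki_of_le (compl a ⊓ compl b) (compl b) inf_le_right
      rwa [compl_compl] at this
    rw [key x y, key y x, inf_comm]
  · -- orthomodular near semiring law
    intro x y
    exact (sasaki_of_le x (x ⊔ y) le_sup_left).symm
end

section
/- Let R = ⟨R, +, ·, α, 0, 1⟩ be an orthomodular near semiring. Define x ∨ y = x + y, x' = α(x), and x ∧ y = (x' ∨ y')'. Then ⟨R, ∨, ∧, ', 0, 1⟩ is an orthomodular lattice: it is a bounded lattice with antitone involution ' satisfying x ∨ x' = 1 and x ∧ x' = 0, and the orthomodular law holds: x ≤ y implies y = x ∨ (y ∧ x'). -/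
/-- The meet induced on an orthomodular near semiring: x ∧ y = α(α(x) + α(y)). -/
def omInf {R : Type*} (S : OMNearSemiring R) (x y : R) : R :=
  S.alpha (S.add (S.alpha x) (S.alpha y))


namespace OMAux

variable {R : Type*} (S : OMNearSemiring R)

theorem lrefl (x : R) : S.le x x := S.add_idem x

theorem lantisymm {x y : R} (h1 : S.le x y) (h2 : S.le y x) : x = y := by
  unfold NearSemiring.le at h1 h2
  rw [← h2, S.add_comm, h1]

theorem ltrans {x y z : R} (h1 : S.le x y) (h2 : S.le y z) : S.le x z := by
  unfold NearSemiring.le at *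
  rw [← h2, ← S.add_assoc, h1]

theorem le_add_left (x y : R) : S.le x (S.add x y) := by
  unfold NearSemiring.le
  rw [← S.add_assoc, S.add_idem]

theorem le_add_right (x y : R) : S.le y (S.add x y) := by
  rw [S.add_comm]; exact le_add_left S y x

theorem add_le {x y z : R} (h1 : S.le x z) (h2 : S.le y z) : S.le (S.add x y) z := by
  unfold NearSemiring.le at *
  rw [S.add_assoc, h2, h1]

theorem zero_le (x : R) : S.le S.zero x := by
  unfold NearSemiring.le
  rw [S.add_comm, S.add_zero]

theorem le_one (x : R) : S.le x S.one := by
  have h := S.om S.one x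
  rw [S.one_mul] at h
  unfold NearSemiring.le
  rw [S.add_comm, ← h]

theorem antitone {x y : R} (h : S.le x y) : S.le (S.alpha y) (S.alpha x) :=
  S.alpha_antitone x y h

theorem alpha_zero : S.alpha S.zero = S.one := by
  refine lantisymm S (le_one S _) ?_
  have h : S.le (S.alpha (S.alpha S.one)) (S.alpha S.zero) :=
    antitone S (zero_le S (S.alpha S.one))
  rwa [S.alpha_alpha] at h

theorem alpha_one : S.alpha S.one = S.zero := by
  have h := congrArg S.alpha (alpha_zero S)
  rw [S.alpha_alpha] at h
  exact h.symm

theorem mul_alpha_self (x : R) : S.mul x (S.alpha x) = S.zero := by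
  have h := S.luk x S.one
  rw [alpha_one, S.mul_zero, S.one_mul, S.alpha_alpha] at h
  exact h.symm

theorem alpha_mul_self (x : R) : S.mul (S.alpha x) x = S.zero := by
  have h := mul_alpha_self S (S.alpha x)
  rwa [S.alpha_alpha] at h

theorem mul_of_le {x y : R} (h : S.le x y) : S.mul x y = x := by
  have h2 := S.om x y
  unfold NearSemiring.le at h
  rw [h] at h2
  exact h2.symm

theorem mul_le_mul_right {a b : R} (h : S.le a b) (c : R) :
    S.le (S.mul a c) (S.mul b c) := by
  unfold NearSemiring.le at *
  rw [← S.right_distrib, h]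

theorem mul_le_right (x y : R) : S.le (S.mul x y) y := by
  have h := mul_le_mul_right S (le_one S x) y
  rwa [S.one_mul] at h

theorem eq_zero_of_add_eq_zero_left {a b : R} (h : S.add a b = S.zero) : a = S.zero := by
  have h1 : S.le a S.zero := by
    have := le_add_left S a b
    rwa [h] at this
  unfold NearSemiring.le at h1
  rw [← h1, S.add_zero]

theorem inf_le_left (x y : R) : S.le (omInf S x y) x := by
  have h := antitone S (le_add_left S (S.alpha x) (S.alpha y))
  rwa [S.alpha_alpha] at h

theorem inf_le_right (x y : R) : S.le (omInf S x y) y := by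
  have h := antitone S (le_add_right S (S.alpha x) (S.alpha y))
  rwa [S.alpha_alpha] at h

theorem le_inf {x y z : R} (h1 : S.le z x) (h2 : S.le z y) : S.le z (omInf S x y) := by
  have h := antitone S (add_le S (antitone S h1) (antitone S h2))
  rwa [S.alpha_alpha] at h

/-- (7): if x ≤ y then α(x)·y = y·α(x). -/
theorem alpha_mul_comm {x y : R} (h : S.le x y) :
    S.mul (S.alpha x) y = S.mul y (S.alpha x) := by
  have hl := S.luk x (S.alpha y)
  rw [S.alpha_alpha] at hl
  rw [mul_of_le S h] at hl
  rw [mul_of_le S (antitone S h)] at hl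
  rw [S.alpha_alpha] at hl
  exact hl

theorem add_alpha_self (x : R) : S.add x (S.alpha x) = S.one := by
  set t := S.alpha (S.add x (S.alpha x)) with ht
  have halphat : S.alpha t = S.add x (S.alpha x) := by rw [ht, S.alpha_alpha]
  have htx : S.le t x := by
    have h := antitone S (le_add_right S x (S.alpha x))
    rwa [S.alpha_alpha] at h
  have htax : S.le t (S.alpha x) := antitone S (le_add_left S x (S.alpha x))
  -- x·t = 0
  have hdist : S.add (S.mul x t) (S.mul (S.alpha x) t) = S.zero := by
    rw [← S.right_distrib, ← halphat, alpha_mul_self]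
  have hxt : S.mul x t = S.zero := eq_zero_of_add_eq_zero_left S hdist
  -- α(t)·α(x) = α(x)
  have h1 : S.mul (S.alpha t) (S.alpha x) = S.alpha x := by
    have hc := alpha_mul_comm S htax
    rw [hc]
    exact mul_of_le S (antitone S htx)
  -- luk x (α t)
  have hl := S.luk x (S.alpha t)
  rw [S.alpha_alpha, hxt, alpha_zero, S.one_mul, h1, S.alpha_alpha,
    mul_alpha_self] at hl
  -- hl : t = 0
  rw [← halphat, hl, alpha_zero]

theorem inf_alpha_self (x : R) : omInf S x (S.alpha x) = S.zero := by
  unfold omInf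
  rw [S.alpha_alpha, S.add_comm, add_alpha_self, alpha_one]

theorem om_law {x y : R} (h : S.le x y) :
    y = S.add x (omInf S y (S.alpha x)) := by
  set m := omInf S y (S.alpha x) with hm
  have hmy : S.le m y := inf_le_left S y (S.alpha x)
  have hmax : S.le m (S.alpha x) := inf_le_right S y (S.alpha x)
  -- m = α(x)·y
  have hkey : m = S.mul (S.alpha x) y := by
    refine lantisymm S ?_ ?_
    · have h1 : S.le (S.mul m y) (S.mul (S.alpha x) y) :=
        mul_le_mul_right S hmax y
      rwa [mul_of_le S hmy] at h1
    · refine le_inf S (mul_le_right S (S.alpha x) y) ?_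
      rw [alpha_mul_comm S h]
      exact mul_le_right S y (S.alpha x)
  have hfin : S.add (S.mul x y) (S.mul (S.alpha x) y) = y := by
    rw [← S.right_distrib, add_alpha_self, S.one_mul]
  rw [mul_of_le S h] at hfin
  rw [hkey]
  exact hfin.symm

end OMAux

/-- Every orthomodular near semiring, with x ∨ y = x + y, x' = α(x) and
x ∧ y = (x' ∨ y')', is an orthomodular lattice. -/

theorem omNearSemiring_to_orthomodularLattice {R : Type*} (S : OMNearSemiring R) :
    -- ≤ (defined by x + y = y) is a partial order
    (∀ x : R, S.le x x) ∧
    (∀ x y : R, S.le x y → S.le y x → x = y) ∧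
    (∀ x y z : R, S.le x y → S.le y z → S.le x z) ∧
    -- x ∨ y = x + y is the least upper bound
    (∀ x y : R, S.le x (S.add x y)) ∧
    (∀ x y : R, S.le y (S.add x y)) ∧
    (∀ x y z : R, S.le x z → S.le y z → S.le (S.add x y) z) ∧
    -- x ∧ y = (x' ∨ y')' is the greatest lower bound
    (∀ x y : R, S.le (omInf S x y) x) ∧
    (∀ x y : R, S.le (omInf S x y) y) ∧
    (∀ x y z : R, S.le z x → S.le z y → S.le z (omInf S x y)) ∧
    -- the lattice is bounded by 0 and 1
    (∀ x : R, S.le S.zero x) ∧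
    (∀ x : R, S.le x S.one) ∧
    -- ' = α is an antitone involution
    (∀ x : R, S.alpha (S.alpha x) = x) ∧
    (∀ x y : R, S.le x y → S.le (S.alpha y) (S.alpha x)) ∧
    -- complementation laws
    (∀ x : R, S.add x (S.alpha x) = S.one) ∧
    (∀ x : R, omInf S x (S.alpha x) = S.zero) ∧
    -- the orthomodular law: x ≤ y implies y = x ∨ (y ∧ x')
    (∀ x y : R, S.le x y → y = S.add x (omInf S y (S.alpha x))) := by
  refine ⟨OMAux.lrefl S, fun x y h1 h2 => OMAux.lantisymm S h1 h2,
    fun x y z h1 h2 => OMAux.ltrans S h1 h2,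
    OMAux.le_add_left S, OMAux.le_add_right S,
    fun x y z h1 h2 => OMAux.add_le S h1 h2,
    OMAux.inf_le_left S, OMAux.inf_le_right S,
    fun x y z h1 h2 => OMAux.le_inf S h1 h2,
    OMAux.zero_le S, OMAux.le_one S, S.alpha_alpha,
    fun x y h => OMAux.antitone S h,
    OMAux.add_alpha_self S, OMAux.inf_alpha_self S,
    fun x y h => OMAux.om_law S h⟩
end

section
/- The constructions between orthomodular lattices and orthomodular near semirings are mutually inverse. Precisely: (i) in any orthomodular lattice ⟨L, ∨, ∧, ', 0, 1⟩, with Sasaki multiplication x·y = (x ∨ y') ∧ y, the meet recovered De Morgan-wise from join equals the original meet, (x' ∨ y')' = x ∧ y; (ii) in any orthomodular near semiring ⟨R, +, ·, α, 0, 1⟩, the Sasaki multiplication of the induced orthomodular lattice recovers the original multiplication, i.e., α(α(x + α(y)) + α(y)) = x·y for all x, y ∈ R. -/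
/-- The constructions between orthomodular lattices and orthomodular near
semirings are mutually inverse. -/
theorem orthomodularLattice_omNearSemiring_inverse {L R : Type*} [Lattice L]
    [BoundedOrder L] (compl : L → L)
    (compl_compl : ∀ x : L, compl (compl x) = x)
    (compl_antitone : ∀ x y : L, x ≤ y → compl y ≤ compl x)
    (inf_compl : ∀ x : L, x ⊓ compl x = ⊥)
    (sup_compl : ∀ x : L, x ⊔ compl x = ⊤)
    (orthomodular : ∀ x y : L, x ≤ y → y = x ⊔ (y ⊓ compl x))
    (S : OMNearSemiring R) :
    -- (i) in an orthomodular lattice, the De Morgan meet equals the meet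
    (∀ x y : L, compl (compl x ⊔ compl y) = x ⊓ y) ∧
    -- (ii) in an orthomodular near semiring, the Sasaki multiplication of the
    -- induced orthomodular lattice recovers the original multiplication:
    -- α(α(x + α(y)) + α(y)) = x·y
    (∀ x y : R,
      S.alpha (S.add (S.alpha (S.add x (S.alpha y))) (S.alpha y)) = S.mul x y) := by
  constructor
  · -- part (i)
    intro x y
    apply le_antisymm
    · apply le_inf
      · have h := compl_antitone _ _ (le_sup_left : compl x ≤ compl x ⊔ compl y)
        rwa [compl_compl] at h
      · have h := compl_antitone _ _ (le_sup_right : compl y ≤ compl x ⊔ compl y)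
        rwa [compl_compl] at h
    · have h1 : compl x ≤ compl (x ⊓ y) := compl_antitone _ _ inf_le_left
      have h2 : compl y ≤ compl (x ⊓ y) := compl_antitone _ _ inf_le_right
      have h := compl_antitone _ _ (sup_le h1 h2)
      rwa [compl_compl] at h
  · -- part (ii)
    -- basic lemmas about the near semiring order
    have le_trans' : ∀ u v w : R, S.add u v = v → S.add v w = w → S.add u w = w := by
      intro u v w h1 h2
      calc S.add u w = S.add u (S.add v w) := by rw [h2]
        _ = S.add (S.add u v) w := (S.add_assoc u v w).symm
        _ = S.add v w := by rw [h1]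
        _ = w := h2
    have antisym : ∀ u v : R, S.add u v = v → S.add v u = u → u = v := by
      intro u v h1 h2
      calc u = S.add v u := h2.symm
        _ = S.add u v := S.add_comm v u
        _ = v := h1
    have le_add_left : ∀ u v : R, S.add u (S.add u v) = S.add u v := by
      intro u v
      rw [← S.add_assoc, S.add_idem]
    have le_add_right : ∀ u v : R, S.add v (S.add u v) = S.add u v := by
      intro u v
      rw [S.add_comm u v, ← S.add_assoc, S.add_idem]
    have join_le : ∀ u v w : R, S.add u w = w → S.add v w = w →
        S.add (S.add u v) w = w := by
      intro u v w h1 h2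
      rw [S.add_assoc, h2, h1]
    -- F3 : u ≤ v → u·v = u
    have F3 : ∀ u v : R, S.add u v = v → S.mul u v = u := by
      intro u v h
      have hom := S.om u v
      rw [h] at hom
      exact hom.symm
    -- F6 : u ≤ v → u·w ≤ v·w
    have F6 : ∀ u v w : R, S.add u v = v →
        S.add (S.mul u w) (S.mul v w) = S.mul v w := by
      intro u v w h
      have : S.mul v w = S.add (S.mul u w) (S.mul v w) := by
        rw [← S.right_distrib, h]
      exact this.symm
    -- 1 is top
    have top : ∀ u : R, S.add u S.one = S.one := by
      intro u
      have h := S.om S.one u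
      rw [S.one_mul] at h
      rw [S.add_comm]
      exact h.symm
    -- α 1 = 0
    have alpha_one : S.alpha S.one = S.zero := by
      have h := S.alpha_antitone (S.alpha S.zero) S.one (top _)
      rw [S.alpha_alpha] at h
      calc S.alpha S.one = S.add (S.alpha S.one) S.zero := (S.add_zero _).symm
        _ = S.zero := h
    -- u · α u = 0
    have F5a : ∀ u : R, S.mul u (S.alpha u) = S.zero := by
      intro u
      have h := S.luk u S.one
      simp only [alpha_one, S.mul_zero, S.one_mul, S.alpha_alpha] at h
      exact h.symm
    -- α u · u = 0
    have F5b : ∀ u : R, S.mul (S.alpha u) u = S.zero := by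
      intro u
      have h := F5a (S.alpha u)
      rwa [S.alpha_alpha] at h
    -- F7 : u·v ≤ v
    have F7 : ∀ u v : R, S.add (S.mul u v) v = v := by
      intro u v
      have h := F6 u S.one v (top u)
      rwa [S.one_mul] at h
    intro x y
    -- a := α(x + α y) ≤ y
    set a := S.alpha (S.add x (S.alpha y)) with ha_def
    have ha : S.add a y = y := by
      have h1 : S.add (S.alpha y) (S.add x (S.alpha y)) = S.add x (S.alpha y) :=
        le_add_right _ _
      have h2 := S.alpha_antitone _ _ h1
      rw [S.alpha_alpha] at h2
      exact h2
    -- Step 1 : x·y = (x + αy)·y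
    have step1 : S.mul (S.add x (S.alpha y)) y = S.mul x y := by
      rw [S.right_distrib, F5b, S.add_zero]
    -- c := α a
    set c := S.alpha a with hc_def
    have hc_eq : c = S.add x (S.alpha y) := by rw [hc_def, ha_def, S.alpha_alpha]
    have hyc : S.add (S.alpha y) c = c := S.alpha_antitone a y ha
    -- H : c·y ≤ c (via c·y = y·c from Łukasiewicz)
    have hacy : S.mul (S.alpha c) y = S.alpha c := by
      apply F3
      rw [hc_def, S.alpha_alpha]
      exact ha
    have hαyc : S.mul (S.alpha y) c = S.alpha y := F3 _ _ hyc
    have haac : S.alpha (S.alpha c) = c := S.alpha_alpha c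
    have comm_cy : S.mul c y = S.mul y c := by
      have h := S.luk (S.alpha c) (S.alpha y)
      rw [S.alpha_alpha y, haac] at h
      rw [hacy, hαyc] at h
      rw [haac, S.alpha_alpha y] at h
      exact h
    have H : S.add (S.mul c y) c = c := by
      rw [comm_cy]; exact F7 y c
    -- m := α(a + α y)
    set m := S.alpha (S.add a (S.alpha y)) with hm_def
    have hm_y : S.add m y = y := by
      have h1 : S.add (S.alpha y) (S.add a (S.alpha y)) = S.add a (S.alpha y) :=
        le_add_right _ _
      have h2 := S.alpha_antitone _ _ h1
      rw [S.alpha_alpha] at h2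
      exact h2
    have hm_c : S.add m c = c := by
      have h1 : S.add a (S.add a (S.alpha y)) = S.add a (S.alpha y) :=
        le_add_left _ _
      exact S.alpha_antitone _ _ h1
    -- m ≤ c·y
    have hm_le : S.add m (S.mul c y) = S.mul c y := by
      have h1 : S.mul m y = m := F3 _ _ hm_y
      have h2 := F6 m c y hm_c
      rwa [h1] at h2
    -- c·y ≤ m
    have hle_m : S.add (S.mul c y) m = m := by
      set b := S.mul c y with hb_def
      have hb_y : S.add b y = y := F7 c y
      have hb_c : S.add b c = c := H
      have h1 : S.add a (S.alpha b) = S.alpha b := by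
        have h := S.alpha_antitone _ _ hb_c
        rwa [hc_def, S.alpha_alpha] at h
      have h2 : S.add (S.alpha y) (S.alpha b) = S.alpha b := S.alpha_antitone _ _ hb_y
      have h3 : S.add (S.add a (S.alpha y)) (S.alpha b) = S.alpha b :=
        join_le _ _ _ h1 h2
      have h4 := S.alpha_antitone _ _ h3
      rwa [S.alpha_alpha, ← hm_def] at h4
    have hmb : m = S.mul c y := antisym _ _ hm_le hle_m
    calc S.alpha (S.add a (S.alpha y)) = m := hm_def.symm
      _ = S.mul c y := hmb
      _ = S.mul (S.add x (S.alpha y)) y := by rw [hc_eq]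
      _ = S.mul x y := step1
end

section
/- Let R be an integral involutive near semiring with involution α. Define q(x,y,z) = (x·y) + (α(x)·z). Then q(1,y,z) = y and q(0,y,z) = z for all y, z ∈ R. (Consequently the class of integral involutive near semirings is a Church variety with witness term q.) -/
/-- The term q(x,y,z) = (x·y) + (α(x)·z) witnesses that integral involutive
near semirings form a Church variety: q(1,y,z) = y and q(0,y,z) = z. -/
theorem integralInvNearSemiring_church {R : Type*} (S : InvNearSemiring R)
    (integral : ∀ x : R, S.add x S.one = S.one) :
    (∀ y z : R, S.add (S.mul S.one y) (S.mul (S.alpha S.one) z) = y) ∧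
    (∀ y z : R, S.add (S.mul S.zero y) (S.mul (S.alpha S.zero) z) = z) := by
  have h1 : S.alpha S.one = S.zero := by
    have h := S.alpha_antitone (S.alpha S.zero) S.one (integral _)
    rw [S.alpha_alpha] at h
    rw [← h, S.add_zero]
  have h0 : S.alpha S.zero = S.one := by
    rw [← h1, S.alpha_alpha]
  constructor
  · intro y z
    rw [S.one_mul, h1, S.zero_mul, S.add_zero]
  · intro y z
    rw [S.zero_mul, h0, S.one_mul, S.add_comm, S.add_zero]
end

section
/- Let R be an integral involutive near semiring with involution α, and let e ∈ R be an element satisfying, for all x, y, z, u ∈ R: (1) (e·α(x)) + (α(e)·α(y)) = α((e·x) + (α(e)·y)); and (2) (e·(x·z)) + (α(e)·(y·u)) = ((e·x) + (α(e)·y))·((e·z) + (α(e)·u)). Then for all x, y ∈ R: (i) (e·x) + α(e) = x + α(e); (ii) e·(e·x) = e·x = (e·x)·e; (iii) e·α(e) = 0; (iv) e·x = x·e; (v) e·(x + y) = (e·x) + (e·y); (vi) x ≤ y implies e·x ≤ e·y; (vii) e·(α(e)·x) = 0. -/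
namespace CentralAux

variable {R : Type*}

lemma alpha_one (S : InvNearSemiring R) (integral : ∀ x : R, S.add x S.one = S.one) :
    S.alpha S.one = S.zero := by
  have h2 : ∀ y : R, S.add (S.alpha S.one) y = y := by
    intro y
    have := S.alpha_antitone (S.alpha y) S.one (integral _)
    rwa [S.alpha_alpha] at this
  have := h2 S.zero
  rwa [S.add_zero] at this

lemma zero_add (S : InvNearSemiring R) (x : R) : S.add S.zero x = x := by
  rw [S.add_comm]; exact S.add_zero x

lemma alpha_zero (S : InvNearSemiring R) (integral : ∀ x : R, S.add x S.one = S.one) :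
    S.alpha S.zero = S.one := by
  rw [← alpha_one S integral, S.alpha_alpha]

lemma central_aux (S : InvNearSemiring R)
    (integral : ∀ x : R, S.add x S.one = S.one) (e f : R)
    (hfe : S.alpha f = e)
    (h1 : ∀ x y : R,
      S.add (S.mul e (S.alpha x)) (S.mul f (S.alpha y)) =
      S.alpha (S.add (S.mul e x) (S.mul f y)))
    (h2 : ∀ x y z u : R,
      S.add (S.mul e (S.mul x z)) (S.mul f (S.mul y u)) =
      S.mul (S.add (S.mul e x) (S.mul f y)) (S.add (S.mul e z) (S.mul f u))) :
    (∀ x : R, S.add (S.mul e x) (S.mul f x) = x) ∧           -- star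
    (∀ x z : R, S.mul e (S.mul x z) = S.mul (S.mul e x) (S.mul e z)) ∧ -- C
    (∀ x : R, S.mul e (S.mul e x) = S.mul e x) ∧
    (∀ x : R, S.mul e x = S.mul (S.mul e x) e) ∧
    (S.mul e f = S.zero) ∧
    (∀ x : R, S.mul e x = S.mul x e) ∧
    (∀ x y : R, S.mul e (S.add x y) = S.add (S.mul e x) (S.mul e y)) ∧
    (∀ x : R, S.add (S.mul e x) e = e) ∧                      -- e·x ≤ e
    (∀ x : R, S.mul e (S.mul f x) = S.zero) := by
  have ef1 : S.add e f = S.one := by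
    have := h1 S.zero S.zero
    rw [alpha_zero S integral, S.mul_one, S.mul_one, S.mul_zero, S.mul_zero,
      S.add_zero, alpha_zero S integral] at this
    exact this
  have star : ∀ x : R, S.add (S.mul e x) (S.mul f x) = x := by
    intro x
    rw [← S.right_distrib, ef1, S.one_mul]
  have C : ∀ x z : R, S.mul e (S.mul x z) = S.mul (S.mul e x) (S.mul e z) := by
    intro x z
    have := h2 x S.zero z S.zero
    rw [S.zero_mul, S.mul_zero, S.add_zero, S.add_zero, S.add_zero] at this
    exact this
  have idem2 : ∀ x : R, S.mul e (S.mul e x) = S.mul e x := by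
    intro x
    have := C S.one x
    rw [S.one_mul, S.mul_one] at this
    exact this.symm
  have idem3 : ∀ x : R, S.mul e x = S.mul (S.mul e x) e := by
    intro x
    have := C x S.one
    rwa [S.mul_one, S.mul_one] at this
  have ee : S.mul e e = e := by
    have := idem3 S.one
    rw [S.mul_one] at this
    exact this.symm
  have ef0 : S.mul e f = S.zero := by
    have := h1 f S.zero
    rw [hfe, alpha_zero S integral, S.mul_one, S.mul_zero, S.add_zero, ee, ef1] at this
    -- this : S.one = S.alpha (S.mul e f)
    have h' := congrArg S.alpha this
    rwa [S.alpha_alpha, alpha_one S integral, eq_comm] at h'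
  have fxe : ∀ x : R, S.mul (S.mul f x) e = S.zero := by
    intro x
    have := h2 S.zero x S.one S.zero
    rw [S.zero_mul, S.mul_zero, S.mul_zero, S.mul_zero, S.mul_one, S.add_zero,
      S.add_zero, zero_add S] at this
    exact this.symm
  have comm : ∀ x : R, S.mul e x = S.mul x e := by
    intro x
    conv_rhs => rw [← star x]
    rw [S.right_distrib, ← idem3, fxe, S.add_zero]
  have ldist : ∀ x y : R, S.mul e (S.add x y) = S.add (S.mul e x) (S.mul e y) := by
    intro x y
    rw [comm, S.right_distrib, ← comm, ← comm]
  have exe : ∀ x : R, S.add (S.mul e x) e = e := by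
    intro x
    have := ldist x S.one
    rw [integral, S.mul_one] at this
    exact this.symm
  have efx : ∀ x : R, S.mul e (S.mul f x) = S.zero := by
    intro x
    rw [C, ef0, S.zero_mul]
  exact ⟨star, C, idem2, idem3, ef0, comm, ldist, exe, efx⟩

end CentralAux

/-- Properties of an element e of an integral involutive near semiring
satisfying the two central-element identities. -/
theorem integralInvNearSemiring_central_props {R : Type*} (S : InvNearSemiring R)
    (integral : ∀ x : R, S.add x S.one = S.one) (e : R)
    (h1 : ∀ x y : R,
      S.add (S.mul e (S.alpha x)) (S.mul (S.alpha e) (S.alpha y)) =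
      S.alpha (S.add (S.mul e x) (S.mul (S.alpha e) y)))
    (h2 : ∀ x y z u : R,
      S.add (S.mul e (S.mul x z)) (S.mul (S.alpha e) (S.mul y u)) =
      S.mul (S.add (S.mul e x) (S.mul (S.alpha e) y))
            (S.add (S.mul e z) (S.mul (S.alpha e) u))) :
    -- (i)
    (∀ x : R, S.add (S.mul e x) (S.alpha e) = S.add x (S.alpha e)) ∧
    -- (ii)
    (∀ x : R, S.mul e (S.mul e x) = S.mul e x) ∧
    (∀ x : R, S.mul e x = S.mul (S.mul e x) e) ∧
    -- (iii)
    (S.mul e (S.alpha e) = S.zero) ∧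
    -- (iv)
    (∀ x : R, S.mul e x = S.mul x e) ∧
    -- (v)
    (∀ x y : R, S.mul e (S.add x y) = S.add (S.mul e x) (S.mul e y)) ∧
    -- (vi)
    (∀ x y : R, S.le x y → S.le (S.mul e x) (S.mul e y)) ∧
    -- (vii)
    (∀ x : R, S.mul e (S.mul (S.alpha e) x) = S.zero) := by
  have h1' : ∀ x y : R,
      S.add (S.mul (S.alpha e) (S.alpha x)) (S.mul e (S.alpha y)) =
      S.alpha (S.add (S.mul (S.alpha e) x) (S.mul e y)) := by
    intro x y
    rw [S.add_comm, h1 y x, S.add_comm (S.mul e y)]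
  have h2' : ∀ x y z u : R,
      S.add (S.mul (S.alpha e) (S.mul x z)) (S.mul e (S.mul y u)) =
      S.mul (S.add (S.mul (S.alpha e) x) (S.mul e y))
            (S.add (S.mul (S.alpha e) z) (S.mul e u)) := by
    intro x y z u
    rw [S.add_comm, h2 y x u z, S.add_comm (S.mul e y), S.add_comm (S.mul e u)]
  obtain ⟨star, C, idem2, idem3, ef0, comm, ldist, exe, efx⟩ :=
    CentralAux.central_aux S integral e (S.alpha e) (S.alpha_alpha e) h1 h2
  obtain ⟨star', C', idem2', idem3', ef0', comm', ldist', exe', efx'⟩ :=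
    CentralAux.central_aux S integral (S.alpha e) e rfl h1' h2'
  refine ⟨?_, idem2, idem3, ef0, comm, ldist, ?_, efx⟩
  · intro x
    conv_rhs => rw [← star x]
    rw [S.add_assoc, exe' x]
  · intro x y h
    unfold NearSemiring.le at *
    rw [← ldist, h]
end
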